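/- arXiv:2212.02693 — 7 statements merged into one kernel-verified Lean document; each statement's English description precedes it below -/
import Mathlib

section
/- Let E be a real Hilbert space, Z ⊆ E a nonempty closed convex set, and Π : E → E the metric projection onto Z. Let G : E → E be γ-strongly monotone and L-Lipschitz with 0 < γ ≤ L, and let the step size satisfy 0 < η ≤ γ/L². Then for all z, z' ∈ E, ‖Π(z - η·G z) - Π(z' - η·G z')‖² ≤ (1 - ηγ)·‖z - z'‖². -/
open RealInnerProductSpace

/-- Projected gradient step contraction: if `G` is `γ`-strongly monotone and
`L`-Lipschitz with `0 < γ ≤ L`, `proj` is the metric projection onto a nonempty closed convex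
set `Z`, and `0 < η ≤ γ / L²`, then
`‖proj (z - η G z) - proj (z' - η G z')‖² ≤ (1 - ηγ)‖z - z'‖²`. -/
theorem projected_gradient_step_contraction
    {E : Type*} [NormedAddCommGroup E] [InnerProductSpace ℝ E] [CompleteSpace E]
    (Z : Set E) (hZne : Z.Nonempty) (hZclosed : IsClosed Z) (hZconvex : Convex ℝ Z)
    (proj : E → E)
    (hproj : ∀ z : E, proj z ∈ Z ∧ ∀ w ∈ Z, ⟪z - proj z, w - proj z⟫ ≤ 0)
    (G : E → E) (γ L : ℝ) (hγ : 0 < γ) (hγL : γ ≤ L)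
    (hmono : ∀ z z' : E, γ * ‖z - z'‖ ^ 2 ≤ ⟪G z - G z', z - z'⟫)
    (hlip : ∀ z z' : E, ‖G z - G z'‖ ≤ L * ‖z - z'‖)
    (η : ℝ) (hη0 : 0 < η) (hη : η ≤ γ / L ^ 2) :
    ∀ z z' : E,
      ‖proj (z - η • G z) - proj (z' - η • G z')‖ ^ 2 ≤ (1 - η * γ) * ‖z - z'‖ ^ 2 := by
  -- projection is nonexpansive
  have hne : ∀ u v : E, ‖proj u - proj v‖ ≤ ‖u - v‖ := by
    intro u v
    have h1 := (hproj u).2 (proj v) (hproj v).1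
    have h2 := (hproj v).2 (proj u) (hproj u).1
    have key : ‖proj u - proj v‖ ^ 2 ≤ ⟪u - v, proj u - proj v⟫ := by
      have h2' : 0 ≤ ⟪v - proj v, proj v - proj u⟫ := by
        rw [show proj v - proj u = -(proj u - proj v) by abel, inner_neg_right]; linarith
      have hsum : ⟪(u - proj u) - (v - proj v), proj v - proj u⟫ ≤ 0 := by
        rw [inner_sub_left]; linarith
      have : ⟪u - v, proj u - proj v⟫ - ‖proj u - proj v‖ ^ 2 ≥ 0 := by
        have e : ⟪(u - proj u) - (v - proj v), proj v - proj u⟫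
            = -⟪u - v, proj u - proj v⟫ + ‖proj u - proj v‖ ^ 2 := by
          rw [← real_inner_self_eq_norm_sq]
          rw [show (u - proj u) - (v - proj v) = (u - v) - (proj u - proj v) by abel,
            inner_sub_left]
          rw [show proj v - proj u = -(proj u - proj v) by abel, inner_neg_right,
            inner_neg_right]
          ring
        linarith [hsum, e ▸ hsum]
      linarith
    have hcs := real_inner_le_norm (u - v) (proj u - proj v)
    by_cases h0 : ‖proj u - proj v‖ = 0
    · rw [h0]; positivity
    · have hpos : 0 < ‖proj u - proj v‖ := lt_of_le_of_ne (norm_nonneg _) (Ne.symm h0)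
      nlinarith
  intro z z'
  have hL : 0 < L := lt_of_lt_of_le hγ hγL
  have hnp := hne (z - η • G z) (z' - η • G z')
  have hexp : ‖(z - η • G z) - (z' - η • G z')‖ ^ 2
      = ‖z - z'‖ ^ 2 - 2 * η * ⟪G z - G z', z - z'⟫ + η ^ 2 * ‖G z - G z'‖ ^ 2 := by
    rw [show (z - η • G z) - (z' - η • G z') = (z - z') - η • (G z - G z') by
      rw [smul_sub]; abel]
    rw [@norm_sub_sq_real, real_inner_smul_right, norm_smul, mul_pow, real_inner_comm]
    simp [abs_of_pos hη0]
    ring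
  have hm := hmono z z'
  have hl := hlip z z'
  have hlsq : ‖G z - G z'‖ ^ 2 ≤ L ^ 2 * ‖z - z'‖ ^ 2 := by
    nlinarith [norm_nonneg (G z - G z'), norm_nonneg (z - z')]
  have hηL : η * L ^ 2 ≤ γ := by
    rw [div_eq_mul_inv] at hη
    have := mul_le_mul_of_nonneg_right hη (le_of_lt (pow_pos hL 2))
    rwa [mul_assoc, inv_mul_cancel₀ (by positivity : (L:ℝ)^2 ≠ 0), mul_one] at this
  have step : ‖(z - η • G z) - (z' - η • G z')‖ ^ 2 ≤ (1 - η * γ) * ‖z - z'‖ ^ 2 := by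
    rw [hexp]
    have h1 : η ^ 2 * ‖G z - G z'‖ ^ 2 ≤ η * γ * ‖z - z'‖ ^ 2 := by
      nlinarith [mul_le_mul_of_nonneg_left hlsq (sq_nonneg η),
        mul_le_mul_of_nonneg_right hηL (mul_nonneg hη0.le (sq_nonneg ‖z - z'‖))]
    have h2 : η * (γ * ‖z - z'‖ ^ 2) ≤ η * ⟪G z - G z', z - z'⟫ :=
      mul_le_mul_of_nonneg_left hm hη0.le
    nlinarith
  calc ‖proj (z - η • G z) - proj (z' - η • G z')‖ ^ 2
      ≤ ‖(z - η • G z) - (z' - η • G z')‖ ^ 2 := by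
        have := norm_nonneg (proj (z - η • G z) - proj (z' - η • G z'))
        nlinarith
    _ ≤ (1 - η * γ) * ‖z - z'‖ ^ 2 := step
end

section
/- Primal-dual tracking of equilibrium points: Let E be a real Hilbert space. For each t ∈ ℕ let Z_t ⊆ E be a nonempty closed convex set with metric projection Π_t : E → E, and let G_t : E → E be γ̂-strongly monotone and L̂-Lipschitz with 0 < γ̂ ≤ L̂. Let the step size satisfy 0 < η < min(1/γ̂, γ̂/L̂²), and set α := √(1 - ηγ̂) ∈ (0,1). Suppose z̄_t ∈ Z_t satisfies z̄_t = Π_t(z̄_t - η·G_t z̄_t) for every t, and that the drift is uniformly bounded: ‖z̄_{t+1} - z̄_t‖ ≤ Δ for all t. Then the sequence defined by z_{t+1} = Π_t(z_t - η·G_t z_t) from any initial point z_0 ∈ E satisfies, for all t ∈ ℕ, ‖z_t - z̄_t‖ ≤ α^t·‖z_0 - z̄_0‖ + Δ/(1 - α). -/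
open RealInnerProductSpace

/-- Primal-dual tracking of equilibrium points: the online projected
primal-dual iterates `z (t+1) = proj t (z t - η • G t (z t))` track the fixed points
(`equilibrium points`) `zbar t` of the time-varying primal-dual maps, with
`‖z t - zbar t‖ ≤ α ^ t * ‖z 0 - zbar 0‖ + Δ / (1 - α)` where `α = √(1 - η γ̂)`. -/
theorem primal_dual_tracking
    {E : Type*} [NormedAddCommGroup E] [InnerProductSpace ℝ E] [CompleteSpace E]
    (Z : ℕ → Set E) (hZne : ∀ t, (Z t).Nonempty) (hZclosed : ∀ t, IsClosed (Z t))
    (hZconvex : ∀ t, Convex ℝ (Z t))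
    (proj : ℕ → E → E)
    (hproj : ∀ t, ∀ z : E, proj t z ∈ Z t ∧ ∀ w ∈ Z t, ⟪z - proj t z, w - proj t z⟫ ≤ 0)
    (G : ℕ → E → E) (γ L : ℝ) (hγ : 0 < γ) (hγL : γ ≤ L)
    (hmono : ∀ t, ∀ z z' : E, γ * ‖z - z'‖ ^ 2 ≤ ⟪G t z - G t z', z - z'⟫)
    (hlip : ∀ t, ∀ z z' : E, ‖G t z - G t z'‖ ≤ L * ‖z - z'‖)
    (η : ℝ) (hη0 : 0 < η) (hη : η < min (1 / γ) (γ / L ^ 2))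
    (α : ℝ) (hα : α = Real.sqrt (1 - η * γ))
    (Δ : ℝ) (zbar : ℕ → E) (hzbarZ : ∀ t, zbar t ∈ Z t)
    (hfix : ∀ t, zbar t = proj t (zbar t - η • G t (zbar t)))
    (hdrift : ∀ t, ‖zbar (t + 1) - zbar t‖ ≤ Δ)
    (z : ℕ → E) (hz : ∀ t, z (t + 1) = proj t (z t - η • G t (z t))) :
    ∀ t : ℕ, ‖z t - zbar t‖ ≤ α ^ t * ‖z 0 - zbar 0‖ + Δ / (1 - α) := by
  have hL : 0 < L := lt_of_lt_of_le hγ hγL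
  have hη1 : η < 1 / γ := lt_of_lt_of_le hη (min_le_left _ _)
  have hη2 : η < γ / L ^ 2 := lt_of_lt_of_le hη (min_le_right _ _)
  have hηγ : η * γ < 1 := by
    have h := mul_lt_mul_of_pos_right hη1 hγ
    rwa [one_div, inv_mul_cancel₀ hγ.ne'] at h
  have hpos : 0 < 1 - η * γ := by linarith
  have hα2 : α ^ 2 = 1 - η * γ := by
    rw [hα, Real.sq_sqrt hpos.le]
  have hα0 : 0 ≤ α := hα ▸ Real.sqrt_nonneg _
  have hα1 : α < 1 := by
    rw [hα]
    have : Real.sqrt (1 - η * γ) < Real.sqrt 1 :=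
      Real.sqrt_lt_sqrt hpos.le (by linarith [mul_pos hη0 hγ])
    simpa using this
  have hΔ : 0 ≤ Δ := le_trans (norm_nonneg _) (hdrift 0)
  -- projection is nonexpansive
  have hne : ∀ t (a b : E), ‖proj t a - proj t b‖ ≤ ‖a - b‖ := by
    intro t a b
    set p := proj t a
    set q := proj t b
    have h1 : ⟪a - p, q - p⟫ ≤ 0 := (hproj t a).2 q (hproj t b).1
    have h2 : ⟪b - q, p - q⟫ ≤ 0 := (hproj t b).2 p (hproj t a).1
    have key : ‖p - q‖ ^ 2 ≤ ⟪a - b, p - q⟫ := by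
      have e : ⟪a - b, p - q⟫ - ‖p - q‖ ^ 2 = -⟪a - p, q - p⟫ - ⟪b - q, p - q⟫ := by
        rw [← real_inner_self_eq_norm_sq]
        simp only [inner_sub_left, inner_sub_right]
        ring
      nlinarith [e]
    have cs : ⟪a - b, p - q⟫ ≤ ‖a - b‖ * ‖p - q‖ := real_inner_le_norm _ _
    rcases eq_or_lt_of_le (norm_nonneg (p - q)) with h | h
    · simp [← h]
    · have : ‖p - q‖ ^ 2 ≤ ‖a - b‖ * ‖p - q‖ := le_trans key cs
      nlinarith
  -- the gradient step is an α-contraction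
  have hcontr : ∀ t (a b : E),
      ‖(a - η • G t a) - (b - η • G t b)‖ ≤ α * ‖a - b‖ := by
    intro t a b
    have hmono' := hmono t a b
    have hlip' := hlip t a b
    have hGnn : 0 ≤ ‖G t a - G t b‖ := norm_nonneg _
    have hsq : ‖(a - η • G t a) - (b - η • G t b)‖ ^ 2
        = ‖a - b‖ ^ 2 - 2 * η * ⟪G t a - G t b, a - b⟫ + η ^ 2 * ‖G t a - G t b‖ ^ 2 := by
      have he : (a - η • G t a) - (b - η • G t b) = (a - b) - η • (G t a - G t b) := by
        simp [smul_sub]; abel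
      rw [he, @norm_sub_sq_real, real_inner_smul_right, norm_smul, Real.norm_eq_abs,
        abs_of_pos hη0, mul_pow, real_inner_comm]
      ring
    have hGsq : ‖G t a - G t b‖ ^ 2 ≤ L ^ 2 * ‖a - b‖ ^ 2 := by
      nlinarith [norm_nonneg (a - b)]
    have hηL : η * L ^ 2 ≤ γ := by
      have := (lt_div_iff₀ (by positivity : (0:ℝ) < L ^ 2)).mp hη2
      nlinarith
    have hbound : ‖(a - η • G t a) - (b - η • G t b)‖ ^ 2 ≤ (α * ‖a - b‖) ^ 2 := by
      rw [hsq, mul_pow, hα2]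
      nlinarith [mul_le_mul_of_nonneg_left hmono' hη0.le,
        mul_le_mul_of_nonneg_left hGsq (sq_nonneg η),
        mul_le_mul_of_nonneg_right (mul_le_mul_of_nonneg_left hηL hη0.le)
          (sq_nonneg ‖a - b‖), sq_nonneg η]
    nlinarith [hbound, mul_nonneg hα0 (norm_nonneg (a - b)),
      norm_nonneg ((a - η • G t a) - (b - η • G t b))]
  -- one-step recursion
  have hstep : ∀ t, ‖z (t + 1) - zbar (t + 1)‖ ≤ α * ‖z t - zbar t‖ + Δ := by
    intro t
    have h1 : ‖z (t + 1) - zbar t‖ ≤ α * ‖z t - zbar t‖ := by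
      calc ‖z (t + 1) - zbar t‖
          = ‖proj t (z t - η • G t (z t)) - proj t (zbar t - η • G t (zbar t))‖ := by
            rw [hz t, ← hfix t]
        _ ≤ α * ‖z t - zbar t‖ := le_trans (hne t _ _) (hcontr t _ _)
    calc ‖z (t + 1) - zbar (t + 1)‖
        ≤ ‖z (t + 1) - zbar t‖ + ‖zbar t - zbar (t + 1)‖ := norm_sub_le_norm_sub_add_norm_sub _ _ _
      _ ≤ α * ‖z t - zbar t‖ + Δ := by
          have h2 := hdrift t
          rw [norm_sub_rev] at h2
          linarith
  intro t
  induction t with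
  | zero =>
    simp only [pow_zero, one_mul]
    have : 0 ≤ Δ / (1 - α) := div_nonneg hΔ (by linarith)
    linarith
  | succ t ih =>
    have h3 := mul_le_mul_of_nonneg_left ih hα0
    have h1 := hstep t
    have h2 : α * (α ^ t * ‖z 0 - zbar 0‖ + Δ / (1 - α)) + Δ
        = α ^ (t + 1) * ‖z 0 - zbar 0‖ + Δ / (1 - α) := by
      have h1α : 1 - α ≠ 0 := by linarith
      field_simp
      ring
    calc ‖z (t + 1) - zbar (t + 1)‖ ≤ α * ‖z t - zbar t‖ + Δ := h1
      _ ≤ α * (α ^ t * ‖z 0 - zbar 0‖ + Δ / (1 - α)) + Δ := by linarith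
      _ = α ^ (t + 1) * ‖z 0 - zbar 0‖ + Δ / (1 - α) := h2
end

section
/- Asymptotic tracking: Let E be a real Hilbert space. For each t ∈ ℕ let Z_t ⊆ E be a nonempty closed convex set with metric projection Π_t : E → E, and let G_t : E → E be γ̂-strongly monotone and L̂-Lipschitz with 0 < γ̂ ≤ L̂. Let 0 < η < min(1/γ̂, γ̂/L̂²), set α := √(1 - ηγ̂) ∈ (0,1), suppose z̄_t ∈ Z_t satisfies z̄_t = Π_t(z̄_t - η·G_t z̄_t) for every t, and ‖z̄_{t+1} - z̄_t‖ ≤ Δ for all t. Then the sequence z_{t+1} = Π_t(z_t - η·G_t z_t), started from any z_0 ∈ E, satisfies limsup_{t→∞} ‖z_t - z̄_t‖ ≤ Δ/(1 - α). -/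
open RealInnerProductSpace

private lemma proj_nonexpansive
    {E : Type*} [NormedAddCommGroup E] [InnerProductSpace ℝ E]
    (S : Set E) (P : E → E)
    (hP : ∀ z : E, P z ∈ S ∧ ∀ w ∈ S, ⟪z - P z, w - P z⟫ ≤ 0) (u v : E) :
    ‖P u - P v‖ ≤ ‖u - v‖ := by
  have h1 : ⟪u - P u, P v - P u⟫ ≤ 0 := (hP u).2 (P v) (hP v).1
  have h2 : ⟪v - P v, P u - P v⟫ ≤ 0 := (hP v).2 (P u) (hP u).1
  have h1' : ⟪u - P u, P u - P v⟫ = -⟪u - P u, P v - P u⟫ := by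
    rw [← inner_neg_right]; congr 1; abel
  have key : ‖P u - P v‖ ^ 2 ≤ ⟪u - v, P u - P v⟫ := by
    have hsplit : (u : E) - v = ((u - P u) - (v - P v)) + (P u - P v) := by abel
    rw [hsplit, inner_add_left, inner_sub_left, real_inner_self_eq_norm_sq]
    linarith [h1, h2, h1']
  have hcs : ⟪u - v, P u - P v⟫ ≤ ‖u - v‖ * ‖P u - P v‖ := real_inner_le_norm _ _
  rcases eq_or_lt_of_le (norm_nonneg (P u - P v)) with h0 | h0
  · rw [← h0]; exact norm_nonneg _
  · have : ‖P u - P v‖ * ‖P u - P v‖ ≤ ‖u - v‖ * ‖P u - P v‖ := by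
      nlinarith [key, hcs]
    exact le_of_mul_le_mul_right this h0

/-- Primal-dual asymptotic tracking: the online projected
primal-dual iterates `z (t+1) = proj t (z t - η • G t (z t))` track the fixed points
(`equilibrium points`) `zbar t` of the time-varying primal-dual maps asymptotically:
`limsup ‖z t - zbar t‖ ≤ Δ / (1 - α)` where `α = √(1 - η γ̂)`. -/
theorem primal_dual_asymptotic_tracking
    {E : Type*} [NormedAddCommGroup E] [InnerProductSpace ℝ E] [CompleteSpace E]
    (Z : ℕ → Set E) (hZne : ∀ t, (Z t).Nonempty) (hZclosed : ∀ t, IsClosed (Z t))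
    (hZconvex : ∀ t, Convex ℝ (Z t))
    (proj : ℕ → E → E)
    (hproj : ∀ t, ∀ z : E, proj t z ∈ Z t ∧ ∀ w ∈ Z t, ⟪z - proj t z, w - proj t z⟫ ≤ 0)
    (G : ℕ → E → E) (γ L : ℝ) (hγ : 0 < γ) (hγL : γ ≤ L)
    (hmono : ∀ t, ∀ z z' : E, γ * ‖z - z'‖ ^ 2 ≤ ⟪G t z - G t z', z - z'⟫)
    (hlip : ∀ t, ∀ z z' : E, ‖G t z - G t z'‖ ≤ L * ‖z - z'‖)
    (η : ℝ) (hη0 : 0 < η) (hη : η < min (1 / γ) (γ / L ^ 2))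
    (α : ℝ) (hα : α = Real.sqrt (1 - η * γ))
    (Δ : ℝ) (zbar : ℕ → E) (hzbarZ : ∀ t, zbar t ∈ Z t)
    (hfix : ∀ t, zbar t = proj t (zbar t - η • G t (zbar t)))
    (hdrift : ∀ t, ‖zbar (t + 1) - zbar t‖ ≤ Δ)
    (z : ℕ → E) (hz : ∀ t, z (t + 1) = proj t (z t - η • G t (z t))) :
    Filter.limsup (fun t : ℕ => ‖z t - zbar t‖) Filter.atTop ≤ Δ / (1 - α) := by
  have hL : 0 < L := lt_of_lt_of_le hγ hγL
  have hη1 : η * γ < 1 := by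
    have h := lt_of_lt_of_le hη (min_le_left _ _)
    rw [lt_div_iff₀ hγ] at h
    linarith
  have hη2 : η * L ^ 2 ≤ γ := by
    have h := lt_of_lt_of_le hη (min_le_right _ _)
    rw [lt_div_iff₀ (by positivity : (0:ℝ) < L ^ 2)] at h
    linarith
  have h1 : 0 ≤ 1 - η * γ := by nlinarith
  have hα0 : 0 ≤ α := hα ▸ Real.sqrt_nonneg _
  have hαsq : α ^ 2 = 1 - η * γ := by rw [hα, Real.sq_sqrt h1]
  have hα1 : α < 1 := by nlinarith [hαsq, hα0, mul_pos hη0 hγ]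
  have h1α : 0 < 1 - α := by linarith
  have hΔ0 : 0 ≤ Δ := le_trans (norm_nonneg _) (hdrift 0)
  -- contraction step
  have key : ∀ t, ‖z (t + 1) - zbar (t + 1)‖ ≤ α * ‖z t - zbar t‖ + Δ := by
    intro t
    have hcontr : ‖(z t - η • G t (z t)) - (zbar t - η • G t (zbar t))‖
        ≤ α * ‖z t - zbar t‖ := by
      set a := z t - zbar t with ha
      set g := G t (z t) - G t (zbar t) with hg
      have heq : (z t - η • G t (z t)) - (zbar t - η • G t (zbar t)) = a - η • g := by
        simp only [ha, hg, smul_sub]; abel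
      have hmo : γ * ‖a‖ ^ 2 ≤ ⟪g, a⟫ := hmono t (z t) (zbar t)
      have hli : ‖g‖ ≤ L * ‖a‖ := hlip t (z t) (zbar t)
      have hsq : ‖a - η • g‖ ^ 2 ≤ (1 - η * γ) * ‖a‖ ^ 2 := by
        have hexp : ‖a - η • g‖ ^ 2 = ‖a‖ ^ 2 - 2 * (η * ⟪g, a⟫) + η ^ 2 * ‖g‖ ^ 2 := by
          rw [norm_sub_sq_real, real_inner_smul_right, norm_smul, real_inner_comm]
          simp [Real.norm_eq_abs, abs_of_pos hη0]
          ring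
        rw [hexp]
        have hgn : ‖g‖ ^ 2 ≤ L ^ 2 * ‖a‖ ^ 2 := by
          nlinarith [norm_nonneg g, norm_nonneg a]
        nlinarith [mul_le_mul_of_nonneg_left hmo hη0.le,
          mul_le_mul_of_nonneg_left hgn (sq_nonneg η),
          mul_le_mul_of_nonneg_left hη2 (mul_nonneg hη0.le (sq_nonneg ‖a‖))]
      have : ‖a - η • g‖ ^ 2 ≤ (α * ‖a‖) ^ 2 := by
        rw [mul_pow, hαsq]; linarith
      have hnn : 0 ≤ α * ‖a‖ := mul_nonneg hα0 (norm_nonneg _)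
      calc ‖(z t - η • G t (z t)) - (zbar t - η • G t (zbar t))‖
          = ‖a - η • g‖ := by rw [heq]
        _ = Real.sqrt (‖a - η • g‖ ^ 2) := by rw [Real.sqrt_sq (norm_nonneg _)]
        _ ≤ Real.sqrt ((α * ‖a‖) ^ 2) := Real.sqrt_le_sqrt this
        _ = α * ‖a‖ := Real.sqrt_sq hnn
    have hne : ‖z (t + 1) - zbar t‖ ≤ α * ‖z t - zbar t‖ := by
      have h5 := proj_nonexpansive (Z t) (proj t) (hproj t)
        (z t - η • G t (z t)) (zbar t - η • G t (zbar t))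
      rw [← hz t, ← hfix t] at h5
      exact le_trans h5 hcontr
    calc ‖z (t + 1) - zbar (t + 1)‖
        ≤ ‖z (t + 1) - zbar t‖ + ‖zbar t - zbar (t + 1)‖ := by
          have : z (t + 1) - zbar (t + 1) = (z (t + 1) - zbar t) + (zbar t - zbar (t + 1)) := by
            abel
          rw [this]; exact norm_add_le _ _
      _ ≤ α * ‖z t - zbar t‖ + Δ := by
          have := hdrift t
          rw [norm_sub_rev] at this
          linarith [hne]
  -- explicit bound by induction
  have hbound : ∀ t, ‖z t - zbar t‖ ≤ α ^ t * ‖z 0 - zbar 0‖ + Δ / (1 - α) := by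
    intro t
    induction t with
    | zero => simp; positivity
    | succ n ih =>
      have h2 : α * (α ^ n * ‖z 0 - zbar 0‖ + Δ / (1 - α)) + Δ
          = α ^ (n + 1) * ‖z 0 - zbar 0‖ + Δ / (1 - α) := by
        field_simp
        ring
      calc ‖z (n + 1) - zbar (n + 1)‖ ≤ α * ‖z n - zbar n‖ + Δ := key n
        _ ≤ α * (α ^ n * ‖z 0 - zbar 0‖ + Δ / (1 - α)) + Δ := by
            have := mul_le_mul_of_nonneg_left ih hα0
            linarith
        _ = α ^ (n + 1) * ‖z 0 - zbar 0‖ + Δ / (1 - α) := h2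
  -- pass to limsup
  have htend : Filter.Tendsto (fun t : ℕ => α ^ t * ‖z 0 - zbar 0‖ + Δ / (1 - α))
      Filter.atTop (nhds (Δ / (1 - α))) := by
    have h0 : Filter.Tendsto (fun t : ℕ => α ^ t) Filter.atTop (nhds 0) :=
      tendsto_pow_atTop_nhds_zero_of_lt_one hα0 hα1
    have := (h0.mul_const ‖z 0 - zbar 0‖).add_const (Δ / (1 - α))
    simpa using this
  have h2 : Filter.limsup (fun t : ℕ => α ^ t * ‖z 0 - zbar 0‖ + Δ / (1 - α))
      Filter.atTop = Δ / (1 - α) := htend.limsup_eq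
  have hco : Filter.IsCoboundedUnder (· ≤ ·) Filter.atTop (fun t : ℕ => ‖z t - zbar t‖) :=
    Filter.isCoboundedUnder_le_of_le Filter.atTop (x := 0) fun t => norm_nonneg _
  have hbd : Filter.IsBoundedUnder (· ≤ ·) Filter.atTop
      (fun t : ℕ => α ^ t * ‖z 0 - zbar 0‖ + Δ / (1 - α)) :=
    htend.isBoundedUnder_le
  calc Filter.limsup (fun t : ℕ => ‖z t - zbar t‖) Filter.atTop
      ≤ Filter.limsup (fun t : ℕ => α ^ t * ‖z 0 - zbar 0‖ + Δ / (1 - α)) Filter.atTop :=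
        Filter.limsup_le_limsup (Filter.Eventually.of_forall hbound) hco hbd
    _ = Δ / (1 - α) := h2
end

section
/- Uniqueness of equilibrium points: Let E be a real Hilbert space, Z ⊆ E nonempty and closed, and G : E × E → E a map such that (i) for every fixed ẑ ∈ E, the map z ↦ G(z, ẑ) is γ-strongly monotone with γ > 0, and (ii) for every fixed z ∈ E, ‖G(z, ẑ) - G(z, ẑ')‖ ≤ εL·‖ẑ - ẑ'‖ for all ẑ, ẑ' ∈ E, where εL < γ. Suppose T : E → E satisfies, for every ẑ ∈ E: T ẑ ∈ Z and ⟪G(T ẑ, ẑ), w - T ẑ⟫ ≥ 0 for all w ∈ Z. Then T has a unique fixed point z̄ ∈ Z; equivalently, there is a unique z̄ ∈ Z satisfying ⟪G(z̄, z̄), w - z̄⟫ ≥ 0 for all w ∈ Z. -/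
open RealInnerProductSpace

/-- Uniqueness of equilibrium points: under `ε * L < γ`, the retraining
map `T` (which sends a parameter `ẑ` to the solution of the variational inequality of
`G · ẑ` over `Z`) has a unique fixed point in `Z`; equivalently, there is a unique
`zbar ∈ Z` with `⟪G zbar zbar, w - zbar⟫ ≥ 0` for all `w ∈ Z`. -/
theorem equilibrium_point_uniqueness
    {E : Type*} [NormedAddCommGroup E] [InnerProductSpace ℝ E] [CompleteSpace E]
    (Z : Set E) (hZne : Z.Nonempty) (hZclosed : IsClosed Z)
    (G : E → E → E) (γ ε L : ℝ) (hγ : 0 < γ) (hεLγ : ε * L < γ)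
    (hmono : ∀ zhat : E, ∀ z z' : E, γ * ‖z - z'‖ ^ 2 ≤ ⟪G z zhat - G z' zhat, z - z'⟫)
    (hdev : ∀ z : E, ∀ zhat zhat' : E, ‖G z zhat - G z zhat'‖ ≤ ε * L * ‖zhat - zhat'‖)
    (T : E → E)
    (hT : ∀ zhat : E, T zhat ∈ Z ∧ ∀ w ∈ Z, 0 ≤ ⟪G (T zhat) zhat, w - T zhat⟫) :
    (∃! zbar : E, zbar ∈ Z ∧ T zbar = zbar) ∧
      (∃! zbar : E, zbar ∈ Z ∧ ∀ w ∈ Z, 0 ≤ ⟪G zbar zbar, w - zbar⟫) := by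
  haveI : Nonempty E := ⟨hZne.choose⟩
  -- Key contraction estimate
  have key : ∀ a b : E, γ * ‖T a - T b‖ ^ 2 ≤ ε * L * ‖a - b‖ * ‖T a - T b‖ := by
    intro a b
    set z := T a
    set z' := T b
    have h1 : 0 ≤ ⟪G z a, z' - z⟫ := (hT a).2 z' (hT b).1
    have h2 : 0 ≤ ⟪G z' b, z - z'⟫ := (hT b).2 z (hT a).1
    have hcross : ⟪G z a - G z' b, z - z'⟫ ≤ 0 := by
      have : ⟪G z a - G z' b, z - z'⟫ = -⟪G z a, z' - z⟫ - ⟪G z' b, z - z'⟫ := by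
        rw [inner_sub_left]
        have : ⟪G z a, z - z'⟫ = -⟪G z a, z' - z⟫ := by
          rw [← inner_neg_right, neg_sub]
        rw [this]
      rw [this]; linarith
    have hmb := hmono b z z'
    have hsplit : ⟪G z b - G z' b, z - z'⟫
        = ⟪G z b - G z a, z - z'⟫ + ⟪G z a - G z' b, z - z'⟫ := by
      rw [← inner_add_left]
      congr 1
      abel
    have hCS : ⟪G z b - G z a, z - z'⟫ ≤ ε * L * ‖a - b‖ * ‖z - z'‖ := by
      have hn : ‖b - a‖ = ‖a - b‖ := norm_sub_rev _ _
      calc ⟪G z b - G z a, z - z'⟫ ≤ ‖G z b - G z a‖ * ‖z - z'‖ :=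
            real_inner_le_norm _ _
        _ ≤ ε * L * ‖b - a‖ * ‖z - z'‖ :=
            mul_le_mul_of_nonneg_right (hdev z b a) (norm_nonneg _)
        _ = ε * L * ‖a - b‖ * ‖z - z'‖ := by rw [hn]
    calc γ * ‖z - z'‖ ^ 2 ≤ ⟪G z b - G z' b, z - z'⟫ := hmb
      _ ≤ ε * L * ‖a - b‖ * ‖z - z'‖ := by rw [hsplit]; linarith
  -- Lipschitz bound with constant K = max (εL/γ) 0
  set K : ℝ := max (ε * L / γ) 0 with hK
  have hK1 : K < 1 := by
    apply max_lt _ one_pos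
    rw [div_lt_one hγ]; exact hεLγ
  have hlip : ∀ a b : E, ‖T a - T b‖ ≤ K * ‖a - b‖ := by
    intro a b
    rcases eq_or_lt_of_le (norm_nonneg (T a - T b)) with h0 | h0
    · rw [← h0]
      exact mul_nonneg (le_max_right _ _) (norm_nonneg _)
    · have := key a b
      have h1 : γ * ‖T a - T b‖ ≤ ε * L * ‖a - b‖ := by
        nlinarith
      have h2 : ‖T a - T b‖ ≤ ε * L / γ * ‖a - b‖ := by
        rw [div_mul_eq_mul_div, le_div_iff₀ hγ]; nlinarith
      calc ‖T a - T b‖ ≤ ε * L / γ * ‖a - b‖ := h2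
        _ ≤ K * ‖a - b‖ := by
            apply mul_le_mul_of_nonneg_right (le_max_left _ _) (norm_nonneg _)
  have hK0 : 0 ≤ K := le_max_right _ _
  have hcontr : ContractingWith ⟨K, hK0⟩ T := by
    constructor
    · exact_mod_cast hK1
    · apply LipschitzWith.of_dist_le_mul
      intro a b
      simp only [dist_eq_norm]; exact hlip a b
  -- fixed point existence and uniqueness
  obtain ⟨zbar, hzbar⟩ : ∃ z : E, T z = z := ⟨_, hcontr.fixedPoint_isFixedPt⟩
  have huniq : ∀ x : E, T x = x → x = zbar := by
    intro x hx
    have := hlip x zbar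
    rw [hx, hzbar] at this
    have hle : ‖x - zbar‖ ≤ 0 := by nlinarith [norm_nonneg (x - zbar)]
    have hnn : ‖x - zbar‖ = 0 := le_antisymm hle (norm_nonneg _)
    exact norm_sub_eq_zero_iff.mp hnn
  have hzZ : zbar ∈ Z := hzbar ▸ (hT zbar).1
  constructor
  · exact ⟨zbar, ⟨hzZ, hzbar⟩, fun y hy => huniq y hy.2⟩
  · refine ⟨zbar, ⟨hzZ, ?_⟩, ?_⟩
    · intro w hw
      have := (hT zbar).2 w hw
      rwa [hzbar] at this
    · intro y ⟨hyZ, hyVI⟩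
      -- y solves VI of G(·, y); so does T y; strong monotonicity forces T y = y
      have h1 : 0 ≤ ⟪G (T y) y, y - T y⟫ := (hT y).2 y hyZ
      have h2 : 0 ≤ ⟪G y y, T y - y⟫ := hyVI (T y) (hT y).1
      have hm := hmono y y (T y)
      have hsum : ⟪G y y - G (T y) y, y - T y⟫ ≤ 0 := by
        rw [inner_sub_left]
        have : ⟪G y y, y - T y⟫ = -⟪G y y, T y - y⟫ := by
          rw [← inner_neg_right, neg_sub]
        rw [this]; linarith
      have hsq : ‖y - T y‖ ^ 2 = 0 := by
        have h3 : γ * ‖y - T y‖ ^ 2 ≤ 0 := le_trans hm hsum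
        nlinarith [sq_nonneg ‖y - T y‖]
      have hzero : ‖y - T y‖ = 0 := by
        have := sq_eq_zero_iff.mp hsq
        exact this
      have hTy : T y = y := (norm_sub_eq_zero_iff.mp hzero).symm
      exact huniq y hTy
end

section
/- Sub-Weibull tail bound implies moment bound: Let ξ be a real random variable and θ, ν₁ > 0 such that P(|ξ| ≥ ε) ≤ 2·exp(-(ε/ν₁)^{1/θ}) for all ε > 0. Then there exists ν₂ > 0 such that (E|ξ|^p)^{1/p} ≤ ν₂·p^θ for all real p ≥ 1. -/
open MeasureTheory Real Set

lemma integrableOn_rpow_mul_exp_neg_mul_rpow' {P s b : ℝ} (hs : -1 < s) (hP : 0 < P) (hb : 0 < b) :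
    IntegrableOn (fun x : ℝ => x ^ s * Real.exp (- b * x ^ P)) (Ioi 0) := by
  have h := (integrableOn_Ioi_comp_rpow_iff (fun u : ℝ => u ^ ((s + 1) / P - 1) * Real.exp (-b * u)) hP.ne').mpr ?_
  · have h2 : IntegrableOn
        (fun x : ℝ => P⁻¹ * ((|P| * x ^ (P - 1)) • ((x ^ P) ^ ((s + 1) / P - 1) * Real.exp (-b * x ^ P))))
        (Ioi 0) := h.const_mul P⁻¹
    refine h2.congr_fun (fun x hx => ?_) measurableSet_Ioi
    have hx0 : (0:ℝ) < x := hx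
    dsimp only
    rw [smul_eq_mul, abs_of_pos hP, ← Real.rpow_mul hx0.le]
    have hh : P * ((s + 1) / P - 1) = s + 1 - P := by field_simp
    rw [hh, show P⁻¹ * (P * x ^ (P - 1) * (x ^ (s + 1 - P) * rexp (-b * x ^ P)))
        = (P⁻¹ * P) * (x ^ (P - 1) * x ^ (s + 1 - P)) * rexp (-b * x ^ P) by ring,
      inv_mul_cancel₀ hP.ne', ← Real.rpow_add hx0]
    ring_nf
  · have h1 : (-1:ℝ) < (s+1)/P - 1 := by
      have : 0 < (s+1)/P := div_pos (by linarith) hP; linarith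
    simpa using integrableOn_rpow_mul_exp_neg_mul_rpow h1 zero_lt_one hb

lemma gamma_key {θ p : ℝ} (hθ : 0 < θ) (hp : 1 ≤ p) :
    2 * p * θ * Real.Gamma (p * θ) ≤ ((2 * Real.exp 3 * (θ + 2) ^ (θ + 2)) * p ^ θ) ^ p := by
  have hp0 : (0:ℝ) < p := lt_of_lt_of_le one_pos hp
  have hx : 0 < p * θ := mul_pos hp0 hθ
  -- LHS = 2 * Γ(pθ+1)
  have e1 : 2 * p * θ * Real.Gamma (p * θ) = 2 * Real.Gamma (p * θ + 1) := by
    rw [Real.Gamma_add_one hx.ne']; ring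
  -- Γ(pθ+1) ≤ Γ(pθ+2)
  have e2 : Real.Gamma (p * θ + 1) ≤ Real.Gamma (p * θ + 2) := by
    have h : Real.Gamma (p * θ + 2) = (p * θ + 1) * Real.Gamma (p * θ + 1) := by
      rw [show p * θ + 2 = (p * θ + 1) + 1 by ring,
        Real.Gamma_add_one (show p * θ + 1 ≠ 0 by positivity)]
    have hpos : 0 < Real.Gamma (p * θ + 1) := Real.Gamma_pos_of_pos (by positivity)
    nlinarith [h, hpos]
  set n : ℕ := ⌈p * θ⌉₊ + 1 with hn
  have hn1 : p * θ + 2 ≤ (n : ℝ) + 1 := by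
    have := Nat.le_ceil (p * θ)
    push_cast [hn]; linarith
  have hn2 : (n : ℝ) ≤ p * θ + 2 := by
    have := Nat.ceil_lt_add_one hx.le
    push_cast [hn]; linarith
  have e3 : Real.Gamma (p * θ + 2) ≤ Real.Gamma ((n : ℝ) + 1) := by
    rcases eq_or_lt_of_le hn1 with h | h
    · rw [h]
    · exact le_of_lt (Real.Gamma_strictMonoOn_Ici (by simp; linarith) (by simp; nlinarith) h)
  have e4 : Real.Gamma ((n : ℝ) + 1) ≤ ((n : ℝ)) ^ (n : ℝ) := by
    rw [Real.Gamma_nat_eq_factorial]; show ((Nat.factorial n : ℕ) : ℝ) ≤ _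
    calc ((Nat.factorial n : ℕ) : ℝ) ≤ ((n ^ n : ℕ) : ℝ) := by exact_mod_cast Nat.factorial_le_pow n
      _ = (n : ℝ) ^ (n : ℝ) := by rw [Nat.cast_pow, ← Real.rpow_natCast]
  have e5 : ((n : ℝ)) ^ (n : ℝ) ≤ (p * θ + 2) ^ (p * θ + 2) := by
    calc ((n : ℝ)) ^ (n : ℝ) ≤ (p * θ + 2) ^ (n : ℝ) :=
          Real.rpow_le_rpow (by positivity) hn2 (by positivity)
      _ ≤ (p * θ + 2) ^ (p * θ + 2) :=
          Real.rpow_le_rpow_of_exponent_le (by linarith) hn2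
  -- (pθ+2)^(pθ+2) ≤ (p(θ+2))^(pθ+2) = p^(pθ+2) (θ+2)^(pθ+2)
  have e6 : (p * θ + 2) ^ (p * θ + 2) ≤ p ^ (p * θ + 2) * (θ + 2) ^ (p * θ + 2) := by
    rw [← Real.mul_rpow hp0.le (by linarith)]
    exact Real.rpow_le_rpow (by positivity) (by nlinarith) (by positivity)
  -- RHS expansion
  have hc2 : (0:ℝ) ≤ 2 * Real.exp 3 := by positivity
  have e7 : ((2 * Real.exp 3 * (θ + 2) ^ (θ + 2)) * p ^ θ) ^ p
      = 2 ^ p * Real.exp (3 * p) * (θ + 2) ^ ((θ + 2) * p) * p ^ (θ * p) := by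
    rw [Real.mul_rpow (by positivity) (by positivity),
        Real.mul_rpow (by positivity) (by positivity),
        Real.mul_rpow (by norm_num) (Real.exp_pos 3).le,
        ← Real.exp_mul, ← Real.rpow_mul (by linarith : (0:ℝ) ≤ θ + 2),
        ← Real.rpow_mul hp0.le]
  -- the final comparison
  have key : 2 * (p ^ (p * θ + 2) * (θ + 2) ^ (p * θ + 2))
      ≤ 2 ^ p * Real.exp (3 * p) * (θ + 2) ^ ((θ + 2) * p) * p ^ (θ * p) := by
    have h2p : (2:ℝ) ≤ 2 ^ p := by
      calc (2:ℝ) = 2 ^ (1:ℝ) := (Real.rpow_one 2).symm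
        _ ≤ 2 ^ p := Real.rpow_le_rpow_of_exponent_le one_le_two hp
    have hsplit : p ^ (p * θ + 2) = p ^ (θ * p) * p ^ (2:ℝ) := by
      rw [← Real.rpow_add hp0]; ring_nf
    have hp2 : p ^ (2:ℝ) ≤ Real.exp (3 * p) := by
      have h1 : p ≤ Real.exp p := (Real.add_one_le_exp p).trans' (by linarith)
      calc p ^ (2:ℝ) = p * p := by rw [show (2:ℝ) = (2:ℕ) by norm_num, Real.rpow_natCast]; ring
        _ ≤ Real.exp p * Real.exp p := mul_le_mul h1 h1 hp0.le (Real.exp_pos p).le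
        _ = Real.exp (2 * p) := by rw [← Real.exp_add]; ring_nf
        _ ≤ Real.exp (3 * p) := Real.exp_le_exp.mpr (by linarith)
    have hθ2 : (θ + 2) ^ (p * θ + 2) ≤ (θ + 2) ^ ((θ + 2) * p) :=
      Real.rpow_le_rpow_of_exponent_le (by linarith) (by nlinarith)
    calc 2 * (p ^ (p * θ + 2) * (θ + 2) ^ (p * θ + 2))
        = 2 * (p ^ (θ * p) * p ^ (2:ℝ) * (θ + 2) ^ (p * θ + 2)) := by rw [hsplit]
      _ ≤ 2 ^ p * (p ^ (θ * p) * Real.exp (3 * p) * (θ + 2) ^ ((θ + 2) * p)) := by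
          apply mul_le_mul h2p _ (by positivity) (by positivity)
          exact mul_le_mul (mul_le_mul le_rfl hp2 (by positivity) (by positivity)) hθ2
            (by positivity) (by positivity)
      _ = 2 ^ p * Real.exp (3 * p) * (θ + 2) ^ ((θ + 2) * p) * p ^ (θ * p) := by ring
  calc 2 * p * θ * Real.Gamma (p * θ) = 2 * Real.Gamma (p * θ + 1) := e1
    _ ≤ 2 * (p ^ (p * θ + 2) * (θ + 2) ^ (p * θ + 2)) := by
        have := e2.trans (e3.trans (e4.trans (e5.trans e6)))
        linarith
    _ ≤ 2 ^ p * Real.exp (3 * p) * (θ + 2) ^ ((θ + 2) * p) * p ^ (θ * p) := key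
    _ = _ := e7.symm

/-- Sub-Weibull tail bound implies moment bound: if
`P(|ξ| ≥ ε) ≤ 2 exp(-(ε/ν₁)^{1/θ})` for all `ε > 0`, then there exists `ν₂ > 0` such that
`(E|ξ|^p)^{1/p} ≤ ν₂ p^θ` for all `p ≥ 1`. -/
theorem subWeibull_tail_implies_moment
    {Ω : Type*} [MeasurableSpace Ω] (μ : Measure Ω) [IsProbabilityMeasure μ]
    (ξ : Ω → ℝ) (hmeas : AEStronglyMeasurable ξ μ)
    (θ ν₁ : ℝ) (hθ : 0 < θ) (hν₁ : 0 < ν₁)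
    (htail : ∀ ε : ℝ, 0 < ε →
      μ {ω | ε ≤ |ξ ω|} ≤ ENNReal.ofReal (2 * Real.exp (-(ε / ν₁) ^ (1 / θ)))) :
    ∃ ν₂ : ℝ, 0 < ν₂ ∧
      ∀ p : ℝ, 1 ≤ p → eLpNorm ξ (ENNReal.ofReal p) μ ≤ ENNReal.ofReal (ν₂ * p ^ θ) := by
  set C : ℝ := 2 * Real.exp 3 * (θ + 2) ^ (θ + 2) with hC
  have hCpos : 0 < C := by positivity
  refine ⟨C * ν₁, by positivity, fun p hp => ?_⟩
  have hp0 : (0:ℝ) < p := lt_of_lt_of_le one_pos hp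
  set b : ℝ := ν₁⁻¹ ^ (1/θ) with hb
  have hbpos : 0 < b := by positivity
  -- rewrite eLpNorm
  have hq0 : ENNReal.ofReal p ≠ 0 := by
    simp [ENNReal.ofReal_eq_zero, not_le, hp0]
  rw [eLpNorm_eq_lintegral_rpow_enorm_toReal hq0 ENNReal.ofReal_ne_top,
    ENNReal.toReal_ofReal hp0.le]
  have hrw : ∀ ω : Ω, ‖ξ ω‖ₑ ^ p = ENNReal.ofReal (|ξ ω| ^ p) := by
    intro ω
    rw [← ofReal_norm_eq_enorm, Real.norm_eq_abs,
      ENNReal.ofReal_rpow_of_nonneg (abs_nonneg _) hp0.le]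
  simp_rw [hrw]
  -- layer cake
  rw [lintegral_rpow_eq_lintegral_meas_le_mul μ (f := fun ω => |ξ ω|)
    (ae_of_all _ fun ω => abs_nonneg _) (by simpa [Real.norm_eq_abs] using hmeas.norm.aemeasurable) hp0]
  -- bound the tail integral
  set g : ℝ → ℝ := fun t => 2 * (t ^ (p - 1) * Real.exp (-b * t ^ (1/θ))) with hg
  have hstep : ∫⁻ t in Ioi (0:ℝ), μ {a | t ≤ |ξ a|} * ENNReal.ofReal (t ^ (p - 1))
      ≤ ∫⁻ t in Ioi (0:ℝ), ENNReal.ofReal (g t) := by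
    refine setLIntegral_mono' measurableSet_Ioi (fun t ht => ?_)
    have ht0 : (0:ℝ) < t := ht
    have hexp : (-(t / ν₁) ^ (1 / θ)) = -b * t ^ (1/θ) := by
      rw [div_eq_mul_inv, Real.mul_rpow ht0.le (inv_nonneg.mpr hν₁.le)]
      ring
    calc μ {a | t ≤ |ξ a|} * ENNReal.ofReal (t ^ (p - 1))
        ≤ ENNReal.ofReal (2 * Real.exp (-b * t ^ (1/θ))) * ENNReal.ofReal (t ^ (p - 1)) := by
          gcongr
          rw [← hexp]; exact htail t ht0
      _ = ENNReal.ofReal (g t) := by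
          rw [← ENNReal.ofReal_mul (by positivity)]
          congr 1; simp only [hg]; ring
  have hint : IntegrableOn g (Ioi 0) := by
    have := (integrableOn_rpow_mul_exp_neg_mul_rpow' (s := p - 1) (by linarith)
      (by positivity : (0:ℝ) < 1/θ) hbpos)
    simpa [hg, IntegrableOn] using this.const_mul 2
  have hnn : 0 ≤ᵐ[volume.restrict (Ioi (0:ℝ))] g := by
    filter_upwards [ae_restrict_mem measurableSet_Ioi] with t ht
    have ht0 : (0:ℝ) < t := ht
    positivity
  have hval : ∫ t in Ioi (0:ℝ), g t = 2 * (b ^ (-(p * θ)) * θ * Real.Gamma (p * θ)) := by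
    rw [hg, integral_const_mul, integral_rpow_mul_exp_neg_mul_rpow
      (by positivity : (0:ℝ) < 1/θ) (by linarith : (-1:ℝ) < p - 1) hbpos]
    rw [show p - 1 + 1 = p by ring]
    rw [show -p / (1/θ) = -(p * θ) by field_simp, show p / (1/θ) = p * θ by field_simp]
    rw [show (1:ℝ) / (1/θ) = θ by field_simp]
  have hbp : b ^ (-(p * θ)) = ν₁ ^ p := by
    rw [hb, ← Real.rpow_mul (inv_nonneg.mpr hν₁.le),
      show 1/θ * -(p * θ) = -p by field_simp,
      Real.inv_rpow hν₁.le, Real.rpow_neg hν₁.le, inv_inv]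
  -- assemble bound on the lintegral
  set A : ℝ := 2 * p * θ * (ν₁ ^ p * Real.Gamma (p * θ)) with hA
  have hGpos : 0 < Real.Gamma (p * θ) := Real.Gamma_pos_of_pos (by positivity)
  have hA0 : 0 ≤ A := by rw [hA]; positivity
  have hbound' : ENNReal.ofReal p * ∫⁻ t in Ioi (0:ℝ), μ {a | t ≤ |ξ a|} * ENNReal.ofReal (t ^ (p - 1))
      ≤ ENNReal.ofReal A := by
    calc ENNReal.ofReal p * ∫⁻ t in Ioi (0:ℝ), μ {a | t ≤ |ξ a|} * ENNReal.ofReal (t ^ (p - 1))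
        ≤ ENNReal.ofReal p * ∫⁻ t in Ioi (0:ℝ), ENNReal.ofReal (g t) := mul_le_mul_right hstep _
      _ = ENNReal.ofReal p * ENNReal.ofReal (∫ t in Ioi (0:ℝ), g t) := by
          rw [ofReal_integral_eq_lintegral_ofReal hint hnn]
      _ = ENNReal.ofReal A := by
          rw [hval, hbp, ← ENNReal.ofReal_mul hp0.le]
          congr 1; rw [hA]; ring
  have hfinal : A ^ (1/p) ≤ C * ν₁ * p ^ θ := by
    have hB : (0:ℝ) ≤ 2 * p * θ * Real.Gamma (p * θ) := by positivity
    have h1 : A = ν₁ ^ p * (2 * p * θ * Real.Gamma (p * θ)) := by rw [hA]; ring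
    rw [h1, Real.mul_rpow (by positivity) hB,
        ← Real.rpow_mul hν₁.le, mul_one_div_cancel hp0.ne', Real.rpow_one]
    have h2 : (2 * p * θ * Real.Gamma (p * θ)) ^ (1/p) ≤ ((C * p ^ θ) ^ p) ^ (1/p) :=
      Real.rpow_le_rpow hB (gamma_key hθ hp) (by positivity)
    rw [← Real.rpow_mul (by positivity : (0:ℝ) ≤ C * p ^ θ), mul_one_div_cancel hp0.ne',
      Real.rpow_one] at h2
    calc ν₁ * (2 * p * θ * Real.Gamma (p * θ)) ^ (1/p) ≤ ν₁ * (C * p ^ θ) :=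
          mul_le_mul_of_nonneg_left h2 hν₁.le
      _ = C * ν₁ * p ^ θ := by ring
  calc (ENNReal.ofReal p * ∫⁻ t in Ioi (0:ℝ), μ {a | t ≤ |ξ a|} * ENNReal.ofReal (t ^ (p - 1))) ^ (1/p)
      ≤ (ENNReal.ofReal A) ^ (1/p) := ENNReal.rpow_le_rpow hbound' (by positivity)
    _ = ENNReal.ofReal (A ^ (1/p)) := ENNReal.ofReal_rpow_of_nonneg hA0 (by positivity)
    _ ≤ ENNReal.ofReal (C * ν₁ * p ^ θ) := ENNReal.ofReal_le_ofReal hfinal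
end

section
/- Sub-Weibull closure under multiplication: Let ξ₁ and ξ₂ be (possibly dependent) real random variables on a common probability space with (E|ξ₁|^p)^{1/p} ≤ ν₁·p^{θ₁} and (E|ξ₂|^p)^{1/p} ≤ ν₂·p^{θ₂} for all real p ≥ 1, where θ₁, θ₂, ν₁, ν₂ > 0. Then (E|ξ₁·ξ₂|^p)^{1/p} ≤ ψ(θ₁, θ₂)·ν₁·ν₂·p^{θ₁+θ₂} for all p ≥ 1, where ψ(θ₁, θ₂) := (θ₁ + θ₂)^{θ₁+θ₂}/(θ₁^{θ₁}·θ₂^{θ₂}); i.e., ξ₁·ξ₂ ~ SW(θ₁ + θ₂, ψ(θ₁, θ₂)·ν₁·ν₂). -/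
open MeasureTheory

/-- Sub-Weibull closure under multiplication: if `ξ₁ ~ SW(θ₁, ν₁)` and
`ξ₂ ~ SW(θ₂, ν₂)` (possibly dependent), then
`ξ₁ * ξ₂ ~ SW(θ₁ + θ₂, ψ(θ₁, θ₂) ν₁ ν₂)` with
`ψ(θ₁, θ₂) = (θ₁ + θ₂)^{θ₁+θ₂} / (θ₁^{θ₁} θ₂^{θ₂})`. -/
theorem subWeibull_closure_mul
    {Ω : Type*} [MeasurableSpace Ω] (μ : Measure Ω) [IsProbabilityMeasure μ]
    (ξ₁ ξ₂ : Ω → ℝ) (hmeas₁ : AEStronglyMeasurable ξ₁ μ) (hmeas₂ : AEStronglyMeasurable ξ₂ μ)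
    (θ₁ θ₂ ν₁ ν₂ : ℝ) (hθ₁ : 0 < θ₁) (hθ₂ : 0 < θ₂) (hν₁ : 0 < ν₁) (hν₂ : 0 < ν₂)
    (hmom₁ : ∀ p : ℝ, 1 ≤ p → eLpNorm ξ₁ (ENNReal.ofReal p) μ ≤ ENNReal.ofReal (ν₁ * p ^ θ₁))
    (hmom₂ : ∀ p : ℝ, 1 ≤ p → eLpNorm ξ₂ (ENNReal.ofReal p) μ ≤ ENNReal.ofReal (ν₂ * p ^ θ₂)) :
    ∀ p : ℝ, 1 ≤ p →
      eLpNorm (fun ω => ξ₁ ω * ξ₂ ω) (ENNReal.ofReal p) μ ≤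
        ENNReal.ofReal
          ((θ₁ + θ₂) ^ (θ₁ + θ₂) / (θ₁ ^ θ₁ * θ₂ ^ θ₂) * ν₁ * ν₂ * p ^ (θ₁ + θ₂)) := by
  intro p hp
  have hp0 : 0 < p := lt_of_lt_of_le one_pos hp
  set s : ℝ := θ₁ + θ₂ with hs
  have hs0 : 0 < s := add_pos hθ₁ hθ₂
  set q : ℝ := p * s / θ₁ with hq
  set r : ℝ := p * s / θ₂ with hr
  have hq0 : 0 < q := div_pos (mul_pos hp0 hs0) hθ₁
  have hr0 : 0 < r := div_pos (mul_pos hp0 hs0) hθ₂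
  have hq1 : 1 ≤ q := by
    rw [hq]
    calc (1:ℝ) ≤ p * 1 := by linarith
    _ ≤ p * (s / θ₁) := by
        apply mul_le_mul_of_nonneg_left _ hp0.le
        rw [le_div_iff₀ hθ₁]; linarith
    _ = p * s / θ₁ := by ring
  have hr1 : 1 ≤ r := by
    rw [hr]
    calc (1:ℝ) ≤ p * 1 := by linarith
    _ ≤ p * (s / θ₂) := by
        apply mul_le_mul_of_nonneg_left _ hp0.le
        rw [le_div_iff₀ hθ₂]; linarith
    _ = p * s / θ₂ := by ring
  -- conjugacy in ℝ≥0∞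
  have hpqr : 1 / ENNReal.ofReal p = 1 / ENNReal.ofReal q + 1 / ENNReal.ofReal r := by
    rw [one_div, one_div, one_div, ← ENNReal.ofReal_inv_of_pos hp0,
      ← ENNReal.ofReal_inv_of_pos hq0, ← ENNReal.ofReal_inv_of_pos hr0,
      ← ENNReal.ofReal_add (by positivity) (by positivity)]
    congr 1
    rw [hq, hr]
    field_simp
    exact hs
  have hHolder :
      eLpNorm (fun ω => ξ₁ ω * ξ₂ ω) (ENNReal.ofReal p) μ ≤
        eLpNorm ξ₁ (ENNReal.ofReal q) μ * eLpNorm ξ₂ (ENNReal.ofReal r) μ := by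
    have := eLpNorm_smul_le_mul_eLpNorm (μ := μ) (p := ENNReal.ofReal q)
      (q := ENNReal.ofReal r) (r := ENNReal.ofReal p) hmeas₂ hmeas₁
      (hpqr := ⟨by simpa only [one_div] using hpqr.symm⟩)
    exact this
  refine hHolder.trans ?_
  have h1 := hmom₁ q hq1
  have h2 := hmom₂ r hr1
  calc eLpNorm ξ₁ (ENNReal.ofReal q) μ * eLpNorm ξ₂ (ENNReal.ofReal r) μ
      ≤ ENNReal.ofReal (ν₁ * q ^ θ₁) * ENNReal.ofReal (ν₂ * r ^ θ₂) :=
        mul_le_mul' h1 h2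
    _ = ENNReal.ofReal (ν₁ * q ^ θ₁ * (ν₂ * r ^ θ₂)) := by
        rw [← ENNReal.ofReal_mul (by positivity)]
    _ = ENNReal.ofReal (s ^ s / (θ₁ ^ θ₁ * θ₂ ^ θ₂) * ν₁ * ν₂ * p ^ s) := by
        congr 1
        have hqpow : q ^ θ₁ = p ^ θ₁ * s ^ θ₁ / θ₁ ^ θ₁ := by
          rw [hq, Real.div_rpow (by positivity) hθ₁.le,
            Real.mul_rpow hp0.le hs0.le]
        have hrpow : r ^ θ₂ = p ^ θ₂ * s ^ θ₂ / θ₂ ^ θ₂ := by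
          rw [hr, Real.div_rpow (by positivity) hθ₂.le,
            Real.mul_rpow hp0.le hs0.le]
        have hps : p ^ θ₁ * p ^ θ₂ = p ^ s := by
          rw [hs, Real.rpow_add hp0]
        have hss : s ^ θ₁ * s ^ θ₂ = s ^ s := by
          rw [hs, Real.rpow_add hs0]
        rw [hqpow, hrpow]
        field_simp
        rw [← hps, ← hss]
        ring
end

section
/- Stochastic primal-dual tracking in expectation: Let E be a real Hilbert space. For each t ∈ ℕ let Z_t ⊆ E be a nonempty closed convex set with metric projection Π_t : E → E, and let G_t : E → E be γ̂-strongly monotone and L̂-Lipschitz with 0 < γ̂ ≤ L̂. Let 0 < η < min(1/γ̂, γ̂/L̂²) and α := √(1 - ηγ̂) ∈ (0,1). Suppose z̄_t ∈ Z_t satisfies z̄_t = Π_t(z̄_t - η·G_t z̄_t) for every t and that ‖z̄_{t+1} - z̄_t‖ ≤ Δ for all t. Let (ξ_t)_{t∈ℕ} be E-valued random vectors on a probability space with E‖ξ_t‖ ≤ ν for all t, and define the random sequence z_{t+1} = Π_t(z_t - η·(G_t z_t + ξ_t)) from a deterministic initial point z_0 ∈ E. Then for all t ∈ ℕ, E‖z_t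 - z̄_t‖ ≤ α^t·‖z_0 - z̄_0‖ + Δ/(1 - α) + ην/(1 - α). -/
open MeasureTheory RealInnerProductSpace

/-- Stochastic primal-dual tracking in expectation: the stochastic
projected primal-dual iterates `z (t+1) = proj t (z t - η • (G t (z t) + ξ t))`, driven by
gradient-estimation errors `ξ t` with `E‖ξ t‖ ≤ ν`, track the equilibrium points `zbar t`
in expectation: `E‖z t - zbar t‖ ≤ α^t ‖z 0 - zbar 0‖ + Δ/(1-α) + ην/(1-α)`. -/
theorem stochastic_primal_dual_tracking_expectation
    {E : Type*} [NormedAddCommGroup E] [InnerProductSpace ℝ E] [CompleteSpace E]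
    {Ω : Type*} [MeasurableSpace Ω] (μ : Measure Ω) [IsProbabilityMeasure μ]
    (Z : ℕ → Set E) (hZne : ∀ t, (Z t).Nonempty) (hZclosed : ∀ t, IsClosed (Z t))
    (hZconvex : ∀ t, Convex ℝ (Z t))
    (proj : ℕ → E → E)
    (hproj : ∀ t, ∀ z : E, proj t z ∈ Z t ∧ ∀ w ∈ Z t, ⟪z - proj t z, w - proj t z⟫ ≤ 0)
    (G : ℕ → E → E) (γ L : ℝ) (hγ : 0 < γ) (hγL : γ ≤ L)
    (hmono : ∀ t, ∀ z z' : E, γ * ‖z - z'‖ ^ 2 ≤ ⟪G t z - G t z', z - z'⟫)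
    (hlip : ∀ t, ∀ z z' : E, ‖G t z - G t z'‖ ≤ L * ‖z - z'‖)
    (η : ℝ) (hη0 : 0 < η) (hη : η < min (1 / γ) (γ / L ^ 2))
    (α : ℝ) (hα : α = Real.sqrt (1 - η * γ))
    (Δ : ℝ) (zbar : ℕ → E) (hzbarZ : ∀ t, zbar t ∈ Z t)
    (hfix : ∀ t, zbar t = proj t (zbar t - η • G t (zbar t)))
    (hdrift : ∀ t, ‖zbar (t + 1) - zbar t‖ ≤ Δ)
    (ξ : ℕ → Ω → E) (ν : ℝ) (hξint : ∀ t, Integrable (ξ t) μ)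
    (hξ : ∀ t, ∫ ω, ‖ξ t ω‖ ∂μ ≤ ν)
    (z : ℕ → Ω → E) (z₀ : E) (hz0 : ∀ ω, z 0 ω = z₀)
    (hz : ∀ t, ∀ ω, z (t + 1) ω = proj t (z t ω - η • (G t (z t ω) + ξ t ω))) :
    ∀ t : ℕ,
      ∫ ω, ‖z t ω - zbar t‖ ∂μ ≤
        α ^ t * ‖z₀ - zbar 0‖ + Δ / (1 - α) + η * ν / (1 - α) := by

  -- basic facts
  have hL0 : (0:ℝ) < L := lt_of_lt_of_le hγ hγL
  have hηγ1 : η * γ < 1 := by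
    have h1 : η < 1 / γ := lt_of_lt_of_le hη (min_le_left _ _)
    rw [lt_div_iff₀ hγ] at h1; exact h1
  have hηL : η * L ^ 2 < γ := by
    have h1 : η < γ / L ^ 2 := lt_of_lt_of_le hη (min_le_right _ _)
    rw [lt_div_iff₀ (pow_pos hL0 2)] at h1; exact h1
  have hα0 : 0 ≤ α := hα ▸ Real.sqrt_nonneg _
  have hα2 : α ^ 2 = 1 - η * γ := by
    rw [hα, Real.sq_sqrt]; nlinarith
  have hα1 : α < 1 := by nlinarith
  have h1α : 0 < 1 - α := by linarith
  -- projection is nonexpansive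
  have hne : ∀ t (x y : E), ‖proj t x - proj t y‖ ≤ ‖x - y‖ := by
    intro t x y
    set px := proj t x
    set py := proj t y
    have h1 : ⟪x - px, py - px⟫ ≤ 0 := (hproj t x).2 py (hproj t y).1
    have h2 : ⟪y - py, px - py⟫ ≤ 0 := (hproj t y).2 px (hproj t x).1
    have key : ‖px - py‖ ^ 2 ≤ ⟪x - y, px - py⟫ := by
      have e1 : x - y = (x - px) + (px - py) + (py - y) := by abel
      rw [e1, inner_add_left, inner_add_left, real_inner_self_eq_norm_sq]
      have h1' : ⟪x - px, px - py⟫ ≥ 0 := by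
        have e2 : py - px = -(px - py) := by abel
        rw [e2, inner_neg_right] at h1; linarith
      have h2' : ⟪py - y, px - py⟫ ≥ 0 := by
        have e3 : y - py = -(py - y) := by abel
        rw [e3, inner_neg_left] at h2; linarith
      linarith
    have hcs : ⟪x - y, px - py⟫ ≤ ‖x - y‖ * ‖px - py‖ := real_inner_le_norm _ _
    by_contra hcon
    push_neg at hcon
    nlinarith [norm_nonneg (px - py), norm_nonneg (x - y)]
  -- contraction of the gradient step
  have hcontr : ∀ t (u v : E),
      ‖(u - η • G t u) - (v - η • G t v)‖ ≤ α * ‖u - v‖ := by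
    intro t u v
    have e1 : (u - η • G t u) - (v - η • G t v) = (u - v) - η • (G t u - G t v) := by
      rw [smul_sub]; abel
    have hm := hmono t u v
    have hl := hlip t u v
    have hsq : ‖(u - v) - η • (G t u - G t v)‖ ^ 2 ≤ (α * ‖u - v‖) ^ 2 := by
      rw [@norm_sub_sq_real]
      have hi : ⟪u - v, η • (G t u - G t v)⟫ = η * ⟪G t u - G t v, u - v⟫ := by
        rw [real_inner_smul_right, real_inner_comm]
      have hns : ‖η • (G t u - G t v)‖ = η * ‖G t u - G t v‖ := by
        rw [norm_smul, Real.norm_eq_abs, abs_of_pos hη0]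
      rw [hi, hns]
      have hg0 : 0 ≤ ‖G t u - G t v‖ := norm_nonneg _
      have hA : 2 * η * (γ * ‖u - v‖ ^ 2) ≤ 2 * η * ⟪G t u - G t v, u - v⟫ :=
        mul_le_mul_of_nonneg_left hm (by linarith)
      have hB : η ^ 2 * ‖G t u - G t v‖ ^ 2 ≤ η ^ 2 * (L * ‖u - v‖) ^ 2 :=
        mul_le_mul_of_nonneg_left (pow_le_pow_left₀ hg0 hl 2) (sq_nonneg η)
      have hC : η * (η * L ^ 2 * ‖u - v‖ ^ 2) ≤ η * (γ * ‖u - v‖ ^ 2) :=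
        mul_le_mul_of_nonneg_left
          (mul_le_mul_of_nonneg_right hηL.le (sq_nonneg ‖u - v‖)) hη0.le
      have hD : (α * ‖u - v‖) ^ 2 = (1 - η * γ) * ‖u - v‖ ^ 2 := by
        rw [mul_pow, hα2]
      nlinarith [hA, hB, hC, hD]
    have := Real.sqrt_le_sqrt hsq
    rw [Real.sqrt_sq (norm_nonneg _),
      Real.sqrt_sq (mul_nonneg hα0 (norm_nonneg _))] at this
    rw [e1]; exact this
  -- pointwise recursion
  have hpt : ∀ t ω, ‖z (t + 1) ω - zbar (t + 1)‖ ≤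
      α * ‖z t ω - zbar t‖ + η * ‖ξ t ω‖ + Δ := by
    intro t ω
    have e2 : zbar t = proj t (zbar t - η • G t (zbar t)) := hfix t
    have step1 : ‖z (t + 1) ω - zbar t‖ ≤ α * ‖z t ω - zbar t‖ + η * ‖ξ t ω‖ := by
      rw [hz t ω]
      nth_rewrite 1 [e2]
      refine le_trans (hne t _ _) ?_
      have e3 : (z t ω - η • (G t (z t ω) + ξ t ω)) - (zbar t - η • G t (zbar t)) =
          ((z t ω - η • G t (z t ω)) - (zbar t - η • G t (zbar t))) - η • ξ t ω := by
        rw [smul_add]; abel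
      rw [e3]
      refine le_trans (norm_sub_le _ _) ?_
      have := hcontr t (z t ω) (zbar t)
      have hns : ‖η • ξ t ω‖ = η * ‖ξ t ω‖ := by
        rw [norm_smul, Real.norm_eq_abs, abs_of_pos hη0]
      linarith
    have step2 : ‖zbar t - zbar (t + 1)‖ ≤ Δ := by
      rw [norm_sub_rev]; exact hdrift t
    calc ‖z (t + 1) ω - zbar (t + 1)‖
        ≤ ‖z (t + 1) ω - zbar t‖ + ‖zbar t - zbar (t + 1)‖ :=
          norm_sub_le_norm_sub_add_norm_sub _ _ _
      _ ≤ α * ‖z t ω - zbar t‖ + η * ‖ξ t ω‖ + Δ := by linarith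
  -- measurability
  have hcontG : ∀ t, Continuous (G t) := by
    intro t
    refine (LipschitzWith.of_dist_le_mul (K := ⟨L, hL0.le⟩) ?_).continuous
    intro x y; rw [dist_eq_norm, dist_eq_norm]; exact hlip t x y
  have hcontP : ∀ t, Continuous (proj t) := by
    intro t
    refine (LipschitzWith.of_dist_le_mul (K := 1) ?_).continuous
    intro x y; rw [dist_eq_norm, dist_eq_norm]
    simpa using hne t x y
  have hmeas : ∀ t, AEStronglyMeasurable (z t) μ := by
    intro t
    induction t with
    | zero =>
      have : z 0 = fun _ => z₀ := funext hz0
      rw [this]; exact aestronglyMeasurable_const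
    | succ t ih =>
      have e : z (t + 1) = fun ω => proj t (z t ω - η • (G t (z t ω) + ξ t ω)) :=
        funext (hz t)
      rw [e]
      exact (hcontP t).comp_aestronglyMeasurable
        (ih.sub ((((hcontG t).comp_aestronglyMeasurable ih).add
          (hξint t).1).const_smul η))
  -- integrability
  have hint : ∀ t, Integrable (fun ω => ‖z t ω - zbar t‖) μ := by
    intro t
    induction t with
    | zero =>
      have : (fun ω => ‖z 0 ω - zbar 0‖) = fun _ => ‖z₀ - zbar 0‖ := by
        funext ω; rw [hz0]
      rw [this]; exact integrable_const _
    | succ t ih =>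
      refine Integrable.mono'
        (g := fun ω => α * ‖z t ω - zbar t‖ + η * ‖ξ t ω‖ + Δ)
        (((ih.const_mul α).add ((hξint t).norm.const_mul η)).add (integrable_const Δ))
        (((hmeas (t + 1)).sub aestronglyMeasurable_const).norm) ?_
      filter_upwards with ω
      rw [Real.norm_eq_abs, abs_of_nonneg (norm_nonneg _)]
      exact hpt t ω
  -- integral recursion
  have hrec : ∀ t, ∫ ω, ‖z (t + 1) ω - zbar (t + 1)‖ ∂μ ≤
      α * (∫ ω, ‖z t ω - zbar t‖ ∂μ) + η * ν + Δ := by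
    intro t
    have h1 : ∫ ω, ‖z (t + 1) ω - zbar (t + 1)‖ ∂μ ≤
        ∫ ω, (α * ‖z t ω - zbar t‖ + η * ‖ξ t ω‖ + Δ) ∂μ :=
      integral_mono (hint (t + 1))
        ((((hint t).const_mul α).add ((hξint t).norm.const_mul η)).add
          (integrable_const Δ)) (fun ω => hpt t ω)
    have hfint : Integrable (fun ω => α * ‖z t ω - zbar t‖) μ := (hint t).const_mul α
    have hgint : Integrable (fun ω => η * ‖ξ t ω‖) μ := (hξint t).norm.const_mul η
    have hfg : Integrable (fun ω => α * ‖z t ω - zbar t‖ + η * ‖ξ t ω‖) μ := by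
      exact hfint.add hgint
    have h2 : ∫ ω, (α * ‖z t ω - zbar t‖ + η * ‖ξ t ω‖ + Δ) ∂μ =
        α * (∫ ω, ‖z t ω - zbar t‖ ∂μ) + η * (∫ ω, ‖ξ t ω‖ ∂μ) + Δ := by
      rw [integral_add hfg (integrable_const Δ), integral_add hfint hgint,
        integral_const_mul, integral_const_mul, integral_const]
      simp
    have h3 : η * (∫ ω, ‖ξ t ω‖ ∂μ) ≤ η * ν :=
      mul_le_mul_of_nonneg_left (hξ t) hη0.le
    rw [h2] at h1; linarith
  -- nonnegativity facts
  have hΔ0 : 0 ≤ Δ := le_trans (norm_nonneg _) (hdrift 0)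
  have hν0 : 0 ≤ ν := le_trans (integral_nonneg fun ω => norm_nonneg _) (hξ 0)
  -- final induction
  intro t
  induction t with
  | zero =>
    have e : (fun ω => ‖z 0 ω - zbar 0‖) = fun _ => ‖z₀ - zbar 0‖ := by
      funext ω; rw [hz0]
    rw [e, integral_const]
    simp only [measure_univ, ENNReal.toReal_one, probReal_univ, one_smul, pow_zero, one_mul, smul_eq_mul]
    have : 0 ≤ Δ / (1 - α) := div_nonneg hΔ0 h1α.le
    have : 0 ≤ η * ν / (1 - α) := div_nonneg (mul_nonneg hη0.le hν0) h1α.le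
    linarith
  | succ t ih =>
    have h1 := hrec t
    have h2 : α * (∫ ω, ‖z t ω - zbar t‖ ∂μ) ≤
        α * (α ^ t * ‖z₀ - zbar 0‖ + Δ / (1 - α) + η * ν / (1 - α)) :=
      mul_le_mul_of_nonneg_left ih hα0
    have e1 : α * (Δ / (1 - α)) + Δ = Δ / (1 - α) := by field_simp; ring
    have e2 : α * (η * ν / (1 - α)) + η * ν = η * ν / (1 - α) := by field_simp; ring
    have e3 : α * (α ^ t * ‖z₀ - zbar 0‖) = α ^ (t + 1) * ‖z₀ - zbar 0‖ := by ring
    nlinarith [h1, h2]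
end
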